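/- Let (X, m_Γ, ℤ^d-action, x_1,…,x_n, e_1,…,e_l) be a d-dimensional topological crystal and let R_Γ be a ℤ^d-periodic potential, i.e. functions R_Γ : V(X) → ℝ and R_Γ : A(X) → ℝ with R_Γ(ē) = R_Γ(e), R_Γ(μ·x) = R_Γ(x) and R_Γ(μ·e) = R_Γ(e) for all μ ∈ ℤ^d. Let H₀ := D(X, m_Γ) + R_Γ act on cochains by H₀(f₀, f₁) = (d* f₁ + R_Γ·f₀, d f₀ + R_Γ·f₁), where d and d* are taken with respect to the weight m_Γ. Define h₀ : 𝕋^d → M_{n+l}(ℂ) by: h₀(ξ)_{jℓ} = R_Γ(x_j)·δ_{jℓ} for 1 ≤ j, ℓ ≤ n; h₀(ξ)_{jℓ} = R_Γ(e_{j−n})·δ_{jℓ} for n+1 ≤ j, ℓ ≤ n+l; and for 1 ≤ j ≤ n and n+1 ≤ ℓ ≤ n+l, writing 𝔢 := e_{ℓ−n}, h₀(ξ)_{jℓ} = (m_Γ(𝔢)/m_Γ(x_j))^(1/2)·( −[o(𝔢) = x_j] + e(−ξ·η(𝔢))·[t(𝔢) ∈ ℤ^d·x_j] ) and h₀(ξ)_{ℓj}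 = (m_Γ(𝔢)/m_Γ(x_j))^(1/2)·( −[o(𝔢) = x_j] + e(ξ·η(𝔢))·[t(𝔢) ∈ ℤ^d·x_j] ), where [P] equals 1 if the condition P holds and 0 otherwise. Then for every finitely supported f ∈ l²(X, m_Γ) and every ξ ∈ 𝕋^d one has (W(H₀ f))(ξ) = h₀(ξ)·(Wf)(ξ); in particular H₀ is unitarily equivalent, via the Floquet transform W, to the operator of multiplication by the hermitian-matrix-valued trigonometric-polynomial (hence real-analytic) function h₀ on L²(𝕋^d; ℂ^(n+l)). -/

import Mathlib

open MeasureTheory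
open scoped Classical BigOperators

/-- A graph: countable sets of vertices and oriented edges, origin/terminus maps and the
edge-reversal involution. -/
structure DirGraph where
  V : Type
  A : Type
  countV : Countable V
  countA : Countable A
  o : A → V
  t : A → V
  bar : A → A
  bar_bar : ∀ e, bar (bar e) = e
  bar_ne : ∀ e, bar e ≠ e
  o_bar : ∀ e, o (bar e) = t e
  t_bar : ∀ e, t (bar e) = o e

/-- A weight on a graph. -/
structure Weight (G : DirGraph) where
  mV : G.V → ℝ
  mA : G.A → ℝ
  mV_pos : ∀ x, 0 < mV x
  mA_pos : ∀ e, 0 < mA e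
  mA_bar : ∀ e, mA (G.bar e) = mA e

/-- The coboundary operator `(d f)(e) = f(t e) - f(o e)`. -/
def dCob (G : DirGraph) (f : G.V → ℂ) : G.A → ℂ :=
  fun e => f (G.t e) - f (G.o e)

/-- The boundary operator `(d* g)(x) = -Σ_{e ∈ A_x} (m(e)/m(x)) g(e)`. -/
noncomputable def dBound (G : DirGraph) (m : Weight G) (g : G.A → ℂ) : G.V → ℂ :=
  fun x => -∑ᶠ e ∈ {e | G.o e = x}, ((m.mA e / m.mV x : ℝ) : ℂ) * g e

/-- A `d`-dimensional topological crystal: a locally finite weighted graph with a free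
`ℤ^d`-action preserving all the structure, together with representatives `x_1,…,x_n` of
the vertex orbits and `e_1,…,e_l` of the (unoriented) edge orbits. -/
structure TopCrystal (d n l : ℕ) extends DirGraph where
  locFin : ∀ x : V, {e : A | o e = x}.Finite
  w : Weight toDirGraph
  actV : (Fin d → ℤ) → V → V
  actA : (Fin d → ℤ) → A → A
  actV_zero : ∀ x, actV 0 x = x
  actV_add : ∀ μ ν x, actV (μ + ν) x = actV μ (actV ν x)
  actA_zero : ∀ e, actA 0 e = e
  actA_add : ∀ μ ν e, actA (μ + ν) e = actA μ (actA ν e)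
  act_o : ∀ μ e, o (actA μ e) = actV μ (o e)
  act_t : ∀ μ e, t (actA μ e) = actV μ (t e)
  act_bar : ∀ μ e, bar (actA μ e) = actA μ (bar e)
  w_actV : ∀ μ x, w.mV (actV μ x) = w.mV x
  w_actA : ∀ μ e, w.mA (actA μ e) = w.mA e
  xv : Fin n → V
  eA : Fin l → A
  o_eA : ∀ j, ∃ i, o (eA j) = xv i
  uniqV : ∀ v : V, ∃! p : (Fin d → ℤ) × Fin n, actV p.1 (xv p.2) = v
  uniqA : ∀ a : A, ∃! p : (Fin d → ℤ) × Fin l,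
    Xor' (actA p.1 (eA p.2) = a) (actA p.1 (bar (eA p.2)) = a)

/-- The entire part `[v] ∈ ℤ^d` of a vertex. -/
noncomputable def TopCrystal.ent {d n l : ℕ} (X : TopCrystal d n l) (v : X.V) : Fin d → ℤ :=
  (X.uniqV v).choose.1

/-- The index `η(e) = [t(e)] - [o(e)]` of an oriented edge. -/
noncomputable def TopCrystal.eta {d n l : ℕ} (X : TopCrystal d n l) (e : X.A) : Fin d → ℤ :=
  X.ent (X.t e) - X.ent (X.o e)

/-- The `d`-dimensional torus with its Haar probability measure. -/
abbrev Torus (d : ℕ) := Fin d → AddCircle (1 : ℝ)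

/-- The character `e(ξ·μ) = exp(2πi Σ_j ξ_j μ_j)`. -/
noncomputable def eChar {d : ℕ} (ξ : Torus d) (μ : Fin d → ℤ) : ℂ :=
  fourier 1 (∑ j, μ j • ξ j)

/-- The Floquet transform of a (finitely supported) element of `l²(X, m_Γ)`. -/
noncomputable def floquet {d n l : ℕ} (X : TopCrystal d n l)
    (f0 : X.V → ℂ) (f1 : X.A → ℂ) (ξ : Torus d) : Fin n ⊕ Fin l → ℂ :=
  Sum.elim
    (fun j => (Real.sqrt (X.w.mV (X.xv j)) : ℂ) *
      ∑' μ : Fin d → ℤ, eChar ξ (-μ) * f0 (X.actV μ (X.xv j)))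
    (fun j => (Real.sqrt (X.w.mA (X.eA j)) : ℂ) *
      ∑' μ : Fin d → ℤ, eChar ξ (-μ) * f1 (X.actA μ (X.eA j)))


section FloquetHelpers

open Function

lemma summable_of_fin_supp {ι : Type*} (F : ι → ℂ) (h : (Function.support F).Finite) :
    Summable F :=
  summable_of_ne_finset_zero (s := h.toFinset)
    (fun b hb => Function.notMem_support.mp (fun hb' => hb (h.mem_toFinset.2 hb')))

lemma summable_mul_comp {α β : Type*} (c : α → ℂ) (F : β → ℂ)
    (h : (Function.support F).Finite) (φ : α → β) (hφ : Function.Injective φ) :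
    Summable (fun x => c x * F (φ x)) := by
  apply summable_of_fin_supp
  apply (h.preimage hφ.injOn).subset
  intro x hx
  simp only [Function.mem_support] at hx
  simp only [Set.mem_preimage, Function.mem_support]
  intro h0
  exact hx (by rw [h0, mul_zero])

lemma eChar_add {d : ℕ} (ξ : Torus d) (μ ν : Fin d → ℤ) :
    eChar ξ (μ + ν) = eChar ξ μ * eChar ξ ν := by
  unfold eChar
  have hs : ∑ j, (μ + ν) j • ξ j = (∑ j, μ j • ξ j) + ∑ j, ν j • ξ j := by
    rw [← Finset.sum_add_distrib]
    exact Finset.sum_congr rfl fun j _ => by simp [add_zsmul]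
  rw [hs, fourier_apply, fourier_apply, fourier_apply, one_zsmul, one_zsmul, one_zsmul,
    AddCircle.toCircle_add, Circle.coe_mul]

lemma eChar_zero {d : ℕ} (ξ : Torus d) : eChar ξ 0 = 1 := by
  unfold eChar
  have : ∑ j, (0 : Fin d → ℤ) j • ξ j = 0 := by simp
  rw [this, fourier_eval_zero]

namespace TopCrystal

variable {d n l : ℕ} (X : TopCrystal d n l)

lemma actV_inj (μ : Fin d → ℤ) : Function.Injective (X.actV μ) := fun x y h => by
  have h2 := congrArg (X.actV (-μ)) h
  rwa [← X.actV_add, ← X.actV_add, neg_add_cancel, X.actV_zero, X.actV_zero] at h2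

lemma actA_inj (μ : Fin d → ℤ) : Function.Injective (X.actA μ) := fun x y h => by
  have h2 := congrArg (X.actA (-μ)) h
  rwa [← X.actA_add, ← X.actA_add, neg_add_cancel, X.actA_zero, X.actA_zero] at h2

lemma vpair_eq {μ ν : Fin d → ℤ} {i i' : Fin n}
    (h : X.actV μ (X.xv i) = X.actV ν (X.xv i')) : μ = ν ∧ i = i' := by
  obtain ⟨p, hp, hu⟩ := X.uniqV (X.actV ν (X.xv i'))
  have h3 : ((μ, i) : (Fin d → ℤ) × Fin n) = (ν, i') :=
    (hu (μ, i) h).trans (hu (ν, i') rfl).symm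
  exact ⟨congrArg Prod.fst h3, congrArg Prod.snd h3⟩

noncomputable def idxV (v : X.V) : Fin n := (X.uniqV v).choose.2

lemma ent_spec (v : X.V) : X.actV (X.ent v) (X.xv (X.idxV v)) = v :=
  (X.uniqV v).choose_spec.1

lemma ent_actV (μ : Fin d → ℤ) (i : Fin n) :
    X.ent (X.actV μ (X.xv i)) = μ ∧ X.idxV (X.actV μ (X.xv i)) = i :=
  X.vpair_eq (X.ent_spec _)

lemma xv_inj {i i' : Fin n} (h : X.xv i = X.xv i') : i = i' :=
  (X.vpair_eq (μ := 0) (ν := 0) (by rw [X.actV_zero, X.actV_zero, h])).2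

lemma ent_xv (i : Fin n) : X.ent (X.xv i) = 0 := by
  have h := (X.ent_actV 0 i).1
  rwa [X.actV_zero] at h

lemma actV_free {μ μ' : Fin d → ℤ} {v : X.V} (h : X.actV μ v = X.actV μ' v) : μ = μ' := by
  rw [← X.ent_spec v, ← X.actV_add, ← X.actV_add] at h
  have := (X.vpair_eq h).1
  exact add_right_cancel this

lemma actA_free {μ μ' : Fin d → ℤ} {a : X.A} (h : X.actA μ a = X.actA μ' a) : μ = μ' := by
  have h2 := congrArg X.o h
  rw [X.act_o, X.act_o] at h2
  exact X.actV_free h2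

noncomputable def oi (ℓ : Fin l) : Fin n := (X.o_eA ℓ).choose

lemma o_eA_spec (ℓ : Fin l) : X.o (X.eA ℓ) = X.xv (X.oi ℓ) := (X.o_eA ℓ).choose_spec

noncomputable def ti (ℓ : Fin l) : Fin n := X.idxV (X.t (X.eA ℓ))

noncomputable def teta (ℓ : Fin l) : Fin d → ℤ := X.ent (X.t (X.eA ℓ))

lemma t_spec (ℓ : Fin l) : X.actV (X.teta ℓ) (X.xv (X.ti ℓ)) = X.t (X.eA ℓ) :=
  X.ent_spec _

lemma eta_eA (ℓ : Fin l) : X.eta (X.eA ℓ) = X.teta ℓ := by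
  unfold TopCrystal.eta
  rw [X.o_eA_spec, X.ent_xv, sub_zero]
  rfl

lemma orbit_iff (ℓ : Fin l) (j : Fin n) :
    (∃ μ, X.t (X.eA ℓ) = X.actV μ (X.xv j)) ↔ X.ti ℓ = j := by
  constructor
  · rintro ⟨μ, hμ⟩
    exact (X.vpair_eq ((X.t_spec ℓ).trans hμ)).2
  · rintro rfl
    exact ⟨X.teta ℓ, (X.t_spec ℓ).symm⟩

lemma o_iff (ℓ : Fin l) (j : Fin n) : X.o (X.eA ℓ) = X.xv j ↔ X.oi ℓ = j := by
  rw [X.o_eA_spec]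
  exact ⟨fun h => X.xv_inj h, fun h => by rw [h]⟩

lemma xor_of_true {ν : Fin d → ℤ} {ℓ : Fin l} {a : X.A} (h : X.actA ν (X.eA ℓ) = a) :
    Xor' (X.actA ν (X.eA ℓ) = a) (X.actA ν (X.bar (X.eA ℓ)) = a) :=
  Or.inl ⟨h, fun h' => X.bar_ne (X.eA ℓ) (X.actA_inj ν (h'.trans h.symm))⟩

lemma xor_of_false {ν : Fin d → ℤ} {ℓ : Fin l} {a : X.A} (h : X.actA ν (X.bar (X.eA ℓ)) = a) :
    Xor' (X.actA ν (X.eA ℓ) = a) (X.actA ν (X.bar (X.eA ℓ)) = a) :=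
  Or.inr ⟨h, fun h' => X.bar_ne (X.eA ℓ) (X.actA_inj ν (h.trans h'.symm))⟩

/-- Classification of the oriented edges of the crystal. -/
noncomputable def EAfun (X : TopCrystal d n l) :
    (Fin l × Bool) × (Fin d → ℤ) → X.A :=
  fun p => X.actA p.2 (if p.1.2 then X.eA p.1.1 else X.bar (X.eA p.1.1))

lemma EA_bij : Function.Bijective X.EAfun := by
  constructor
  · rintro ⟨⟨ℓ, b⟩, ν⟩ ⟨⟨ℓ', b'⟩, ν'⟩ h
    simp only [EAfun] at h
    set a := X.actA ν' (if b' then X.eA ℓ' else X.bar (X.eA ℓ')) with ha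
    obtain ⟨q, hq, hu⟩ := X.uniqA a
    have hx : Xor' (X.actA ν (X.eA ℓ) = a) (X.actA ν (X.bar (X.eA ℓ)) = a) := by
      cases b
      · exact X.xor_of_false (by simpa using h)
      · exact X.xor_of_true (by simpa using h)
    have hx' : Xor' (X.actA ν' (X.eA ℓ') = a) (X.actA ν' (X.bar (X.eA ℓ')) = a) := by
      cases b'
      · exact X.xor_of_false (by simp [ha])
      · exact X.xor_of_true (by simp [ha])
    have hpq : ((ν, ℓ) : (Fin d → ℤ) × Fin l) = (ν', ℓ') :=
      (hu _ hx).trans (hu _ hx').symm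
    obtain ⟨h1, h2⟩ : ν = ν' ∧ ℓ = ℓ' := ⟨congrArg Prod.fst hpq, congrArg Prod.snd hpq⟩
    subst h1; subst h2
    have hb : b = b' := by
      cases b <;> cases b'
      · rfl
      · exfalso
        rw [ha] at h
        simp only [reduceIte] at h
        exact X.bar_ne _ (X.actA_inj ν h)
      · exfalso
        rw [ha] at h
        simp only [reduceIte] at h
        exact X.bar_ne _ (X.actA_inj ν h).symm
      · rfl
    subst hb; rfl
  · intro a
    obtain ⟨p, hp, -⟩ := X.uniqA a
    rcases hp with ⟨h1, -⟩ | ⟨h1, -⟩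
    · exact ⟨⟨⟨p.2, true⟩, p.1⟩, by simpa [EAfun] using h1⟩
    · exact ⟨⟨⟨p.2, false⟩, p.1⟩, by simpa [EAfun] using h1⟩

noncomputable def EA (X : TopCrystal d n l) : (Fin l × Bool) × (Fin d → ℤ) ≃ X.A :=
  Equiv.ofBijective X.EAfun X.EA_bij

lemma EA_apply (p : (Fin l × Bool) × (Fin d → ℤ)) :
    X.EA p = X.actA p.2 (if p.1.2 then X.eA p.1.1 else X.bar (X.eA p.1.1)) := rfl

/-- Auxiliary weight function. -/
noncomputable def gW (j : Fin n) (f1 : X.A → ℂ) : X.A → ℂ :=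
  fun a => ((X.w.mA a / X.w.mV (X.xv j) : ℝ) : ℂ) * f1 a

/-- Auxiliary indicator function. -/
noncomputable def FW (j : Fin n) (μ : Fin d → ℤ) (f1 : X.A → ℂ) : X.A → ℂ :=
  fun a => if X.o a = X.actV μ (X.xv j) then X.gW j f1 a else 0

lemma key_dBound (f1 : X.A → ℂ) (hf1fin : (Function.support f1).Finite)
    (μ : Fin d → ℤ) (j : Fin n) :
    dBound X.toDirGraph X.w f1 (X.actV μ (X.xv j)) =
      -∑ ℓ : Fin l, ((X.w.mA (X.eA ℓ) / X.w.mV (X.xv j) : ℝ) : ℂ) *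
        ((if X.oi ℓ = j then f1 (X.actA μ (X.eA ℓ)) else 0) +
         (if X.ti ℓ = j then f1 (X.actA (μ - X.teta ℓ) (X.bar (X.eA ℓ))) else 0)) := by
  classical
  have hfin := X.locFin (X.actV μ (X.xv j))
  have step1 : dBound X.toDirGraph X.w f1 (X.actV μ (X.xv j)) =
      -∑ᶠ a ∈ {e | X.o e = X.actV μ (X.xv j)}, X.gW j f1 a := by
    simp only [dBound, gW, X.w_actV]
  have step2 : ∑ᶠ a ∈ {e | X.o e = X.actV μ (X.xv j)}, X.gW j f1 a
      = ∑ a ∈ hfin.toFinset, X.gW j f1 a := by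
    exact finsum_mem_eq_finite_toFinset_sum _ hfin
  have hFsupp : (Function.support (X.FW j μ f1)).Finite := by
    apply hf1fin.subset
    intro a ha
    simp only [Function.mem_support, FW, gW] at ha
    simp only [Function.mem_support]
    intro h0
    apply ha
    split_ifs
    · rw [h0, mul_zero]
    · rfl
  have hFsum : Summable (X.FW j μ f1) := summable_of_fin_supp _ hFsupp
  have step3 : ∑ a ∈ hfin.toFinset, X.gW j f1 a = ∑' a, X.FW j μ f1 a := by
    have h1 : ∑' a, X.FW j μ f1 a = ∑ a ∈ hfin.toFinset, X.FW j μ f1 a :=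
      tsum_eq_sum (f := X.FW j μ f1) (fun b hb => by
        simp only [FW]
        exact if_neg (fun hc => hb (hfin.mem_toFinset.2 hc)))
    rw [h1]
    exact Finset.sum_congr rfl (fun a ha => by
      simp only [FW]
      exact (if_pos (by simpa using (hfin.mem_toFinset.1 ha))).symm)
  have step4 : ∑' a, X.FW j μ f1 a = ∑' p : (Fin l × Bool) × (Fin d → ℤ), X.FW j μ f1 (X.EA p) :=
    (X.EA.tsum_eq (X.FW j μ f1)).symm
  have hsum2 : Summable (fun p => X.FW j μ f1 (X.EA p)) := by
    apply summable_of_fin_supp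
    apply (hFsupp.preimage (X.EA.injective.injOn)).subset
    intro p hp
    exact hp
  have step5 : ∑' p : (Fin l × Bool) × (Fin d → ℤ), X.FW j μ f1 (X.EA p)
      = ∑ q : Fin l × Bool, ∑' ν, X.FW j μ f1 (X.EA (q, ν)) := by
    rw [Summable.tsum_prod' hsum2 (fun b => hsum2.prod_factor b), tsum_fintype]
  have inner_true : ∀ ℓ : Fin l, ∑' ν, X.FW j μ f1 (X.EA ((ℓ, true), ν))
      = if X.oi ℓ = j then X.gW j f1 (X.actA μ (X.eA ℓ)) else 0 := by
    intro ℓ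
    have hpt : ∀ ν, X.FW j μ f1 (X.EA ((ℓ, true), ν)) =
        if ν = μ then (if X.oi ℓ = j then X.gW j f1 (X.actA μ (X.eA ℓ)) else 0) else 0 := by
      intro ν
      simp only [FW, X.EA_apply, reduceIte]
      rw [X.act_o, X.o_eA_spec]
      by_cases hν : ν = μ
      · subst hν
        by_cases ho : X.oi ℓ = j
        · rw [if_pos (by rw [ho]), if_pos rfl, if_pos ho]
        · rw [if_neg (fun hc => ho (X.vpair_eq hc).2), if_pos rfl, if_neg ho]
      · rw [if_neg (fun hc => hν (X.vpair_eq hc).1), if_neg hν]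
    rw [tsum_congr hpt, tsum_ite_eq]
  have inner_false : ∀ ℓ : Fin l, ∑' ν, X.FW j μ f1 (X.EA ((ℓ, false), ν))
      = if X.ti ℓ = j then X.gW j f1 (X.actA (μ - X.teta ℓ) (X.bar (X.eA ℓ))) else 0 := by
    intro ℓ
    have hpt : ∀ ν, X.FW j μ f1 (X.EA ((ℓ, false), ν)) =
        if ν = μ - X.teta ℓ then
          (if X.ti ℓ = j then X.gW j f1 (X.actA (μ - X.teta ℓ) (X.bar (X.eA ℓ))) else 0)
        else 0 := by
      intro ν
      simp only [FW, X.EA_apply, Bool.false_eq_true, if_false, reduceIte]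
      rw [X.act_o, X.o_bar, ← X.t_spec ℓ, ← X.actV_add]
      by_cases hν : ν = μ - X.teta ℓ
      · subst hν
        by_cases ht : X.ti ℓ = j
        · have harg : μ - X.teta ℓ + X.teta ℓ = μ := by abel
          rw [if_pos (by rw [ht, harg]), if_pos rfl, if_pos ht]
        · rw [if_neg (fun hc => ht (X.vpair_eq hc).2), if_pos rfl, if_neg ht]
      · rw [if_neg (fun hc => hν (eq_sub_of_add_eq (X.vpair_eq hc).1)), if_neg hν]
    rw [tsum_congr hpt, tsum_ite_eq]
  have step6 : ∑ q : Fin l × Bool, ∑' ν, X.FW j μ f1 (X.EA (q, ν))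
      = ∑ ℓ : Fin l, ((if X.oi ℓ = j then X.gW j f1 (X.actA μ (X.eA ℓ)) else 0) +
          (if X.ti ℓ = j then X.gW j f1 (X.actA (μ - X.teta ℓ) (X.bar (X.eA ℓ))) else 0)) := by
    rw [Fintype.sum_prod_type]
    refine Finset.sum_congr rfl (fun ℓ _ => ?_)
    rw [Fintype.sum_bool, inner_true ℓ, inner_false ℓ]
  rw [step1, step2, step3, step4, step5, step6]
  congr 1
  refine Finset.sum_congr rfl (fun ℓ _ => ?_)
  simp only [gW, X.w_actA, X.w.mA_bar, mul_add, mul_ite, mul_zero]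

end TopCrystal

end FloquetHelpers

/-- For a periodic potential `R_Γ`, the Floquet transform intertwines
`H₀ = D(X, m_Γ) + R_Γ` with multiplication by the hermitian matrix-valued analytic
function `h₀`. -/
theorem floquet_gaussBonnet_fibered {d n l : ℕ} (X : TopCrystal d n l)
    (RΓV : X.V → ℝ) (RΓA : X.A → ℝ)
    (hRΓbar : ∀ e, RΓA (X.bar e) = RΓA e)
    (hRΓperV : ∀ μ x, RΓV (X.actV μ x) = RΓV x)
    (hRΓperA : ∀ μ e, RΓA (X.actA μ e) = RΓA e)
    (h0 : Torus d → Matrix (Fin n ⊕ Fin l) (Fin n ⊕ Fin l) ℂ)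
    (hh0diagV : ∀ (ξ : Torus d) (j j' : Fin n),
      h0 ξ (Sum.inl j) (Sum.inl j') = if j = j' then (RΓV (X.xv j) : ℂ) else 0)
    (hh0diagA : ∀ (ξ : Torus d) (j j' : Fin l),
      h0 ξ (Sum.inr j) (Sum.inr j') = if j = j' then (RΓA (X.eA j) : ℂ) else 0)
    (hh0VA : ∀ (ξ : Torus d) (j : Fin n) (ℓ : Fin l),
      h0 ξ (Sum.inl j) (Sum.inr ℓ) =
        (Real.sqrt (X.w.mA (X.eA ℓ) / X.w.mV (X.xv j)) : ℂ) *
          (-(if X.o (X.eA ℓ) = X.xv j then 1 else 0) +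
            eChar ξ (-(X.eta (X.eA ℓ))) *
              (if ∃ μ, X.t (X.eA ℓ) = X.actV μ (X.xv j) then 1 else 0)))
    (hh0AV : ∀ (ξ : Torus d) (j : Fin n) (ℓ : Fin l),
      h0 ξ (Sum.inr ℓ) (Sum.inl j) =
        (Real.sqrt (X.w.mA (X.eA ℓ) / X.w.mV (X.xv j)) : ℂ) *
          (-(if X.o (X.eA ℓ) = X.xv j then 1 else 0) +
            eChar ξ (X.eta (X.eA ℓ)) *
              (if ∃ μ, X.t (X.eA ℓ) = X.actV μ (X.xv j) then 1 else 0)))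
    (f0 : X.V → ℂ) (f1 : X.A → ℂ)
    (hf1 : ∀ e, f1 (X.bar e) = -f1 e)
    (hf0fin : (Function.support f0).Finite)
    (hf1fin : (Function.support f1).Finite)
    (ξ : Torus d) :
    floquet X
      (fun x => dBound X.toDirGraph X.w f1 x + (RΓV x : ℂ) * f0 x)
      (fun e => dCob X.toDirGraph f0 e + (RΓA e : ℂ) * f1 e) ξ
      = Matrix.mulVec (h0 ξ) (floquet X f0 f1 ξ) := by
  classical
  have hW0sum : ∀ i : Fin n, Summable (fun μ : Fin d → ℤ => eChar ξ (-μ) * f0 (X.actV μ (X.xv i))) :=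
    fun i => summable_mul_comp _ f0 hf0fin _ (fun μ μ' h => X.actV_free h)
  have hW1sum : ∀ a : X.A, Summable (fun μ : Fin d → ℤ => eChar ξ (-μ) * f1 (X.actA μ a)) :=
    fun a => summable_mul_comp _ f1 hf1fin _ (fun μ μ' h => X.actA_free h)
  have hsubinj : ∀ c : Fin d → ℤ, Function.Injective (fun μ : Fin d → ℤ => μ - c) := by
    intro c μ μ' h
    have h2 := congrArg (fun x : Fin d → ℤ => x + c) h
    simpa using h2
  funext k
  cases k with
  | inl j =>
    have hshift : ∀ ℓ : Fin l,
        (∑' μ : Fin d → ℤ, eChar ξ (-μ) * f1 (X.actA (μ - X.teta ℓ) (X.bar (X.eA ℓ))))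
          = -(eChar ξ (-(X.teta ℓ)) *
              ∑' μ : Fin d → ℤ, eChar ξ (-μ) * f1 (X.actA μ (X.eA ℓ))) := by
      intro ℓ
      have heq := (Equiv.addRight (X.teta ℓ)).tsum_eq
        (fun μ : Fin d → ℤ => eChar ξ (-μ) * f1 (X.actA (μ - X.teta ℓ) (X.bar (X.eA ℓ))))
      rw [← heq]
      simp only [Equiv.coe_addRight]
      have hpt2 : ∀ μ : Fin d → ℤ,
          eChar ξ (-(μ + X.teta ℓ)) * f1 (X.actA (μ + X.teta ℓ - X.teta ℓ) (X.bar (X.eA ℓ)))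
            = eChar ξ (-(X.teta ℓ)) * -(eChar ξ (-μ) * f1 (X.actA μ (X.eA ℓ))) := by
        intro μ
        have h1 : μ + X.teta ℓ - X.teta ℓ = μ := by abel
        have h2 : -(μ + X.teta ℓ) = -μ + -X.teta ℓ := by abel
        rw [h1, h2, eChar_add, ← X.act_bar, hf1]
        ring
      rw [tsum_congr hpt2, tsum_mul_left, tsum_neg]
      ring
    have hA1 : ∀ ℓ : Fin l, Summable (fun μ : Fin d → ℤ =>
        (-((X.w.mA (X.eA ℓ) / X.w.mV (X.xv j) : ℝ) : ℂ)) *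
          ((if X.oi ℓ = j then (1:ℂ) else 0) * (eChar ξ (-μ) * f1 (X.actA μ (X.eA ℓ))))) :=
      fun ℓ => ((hW1sum (X.eA ℓ)).mul_left _).mul_left _
    have hA2base : ∀ ℓ : Fin l, Summable (fun μ : Fin d → ℤ =>
        eChar ξ (-μ) * f1 (X.actA (μ - X.teta ℓ) (X.bar (X.eA ℓ)))) :=
      fun ℓ => summable_mul_comp _ f1 hf1fin _
        (fun μ μ' h => hsubinj (X.teta ℓ) (X.actA_free h))
    have hA2 : ∀ ℓ : Fin l, Summable (fun μ : Fin d → ℤ =>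
        (-((X.w.mA (X.eA ℓ) / X.w.mV (X.xv j) : ℝ) : ℂ)) *
          ((if X.ti ℓ = j then (1:ℂ) else 0) *
            (eChar ξ (-μ) * f1 (X.actA (μ - X.teta ℓ) (X.bar (X.eA ℓ)))))) :=
      fun ℓ => ((hA2base ℓ).mul_left _).mul_left _
    have hpt : ∀ μ : Fin d → ℤ,
        eChar ξ (-μ) * (dBound X.toDirGraph X.w f1 (X.actV μ (X.xv j)) +
          (RΓV (X.actV μ (X.xv j)) : ℂ) * f0 (X.actV μ (X.xv j)))
        = (∑ ℓ : Fin l,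
            ((-((X.w.mA (X.eA ℓ) / X.w.mV (X.xv j) : ℝ) : ℂ)) *
              ((if X.oi ℓ = j then (1:ℂ) else 0) * (eChar ξ (-μ) * f1 (X.actA μ (X.eA ℓ)))) +
             (-((X.w.mA (X.eA ℓ) / X.w.mV (X.xv j) : ℝ) : ℂ)) *
              ((if X.ti ℓ = j then (1:ℂ) else 0) *
                (eChar ξ (-μ) * f1 (X.actA (μ - X.teta ℓ) (X.bar (X.eA ℓ))))))) +
          (RΓV (X.xv j) : ℂ) * (eChar ξ (-μ) * f0 (X.actV μ (X.xv j))) := by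
      intro μ
      rw [X.key_dBound f1 hf1fin μ j, hRΓperV]
      rw [mul_add, mul_neg, Finset.mul_sum, ← Finset.sum_neg_distrib]
      congr 1
      · exact Finset.sum_congr rfl (fun ℓ _ => by split_ifs <;> ring)
      · ring
    have hper : ∀ ℓ : Fin l,
        (∑' μ : Fin d → ℤ,
            ((-((X.w.mA (X.eA ℓ) / X.w.mV (X.xv j) : ℝ) : ℂ)) *
              ((if X.oi ℓ = j then (1:ℂ) else 0) * (eChar ξ (-μ) * f1 (X.actA μ (X.eA ℓ)))) +
             (-((X.w.mA (X.eA ℓ) / X.w.mV (X.xv j) : ℝ) : ℂ)) *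
              ((if X.ti ℓ = j then (1:ℂ) else 0) *
                (eChar ξ (-μ) * f1 (X.actA (μ - X.teta ℓ) (X.bar (X.eA ℓ)))))))
        = (-((X.w.mA (X.eA ℓ) / X.w.mV (X.xv j) : ℝ) : ℂ)) *
            ((if X.oi ℓ = j then (1:ℂ) else 0) *
              ∑' μ : Fin d → ℤ, eChar ξ (-μ) * f1 (X.actA μ (X.eA ℓ))) +
          (-((X.w.mA (X.eA ℓ) / X.w.mV (X.xv j) : ℝ) : ℂ)) *
            ((if X.ti ℓ = j then (1:ℂ) else 0) *
              -(eChar ξ (-(X.teta ℓ)) *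
                ∑' μ : Fin d → ℤ, eChar ξ (-μ) * f1 (X.actA μ (X.eA ℓ)))) := by
      intro ℓ
      rw [Summable.tsum_add (hA1 ℓ) (hA2 ℓ)]
      simp only [tsum_mul_left]
      rw [hshift ℓ]
    simp only [floquet, Sum.elim_inl, Sum.elim_inr, Matrix.mulVec, dotProduct,
      Fintype.sum_sum_type, hh0diagV, hh0VA, X.eta_eA, X.o_iff, X.orbit_iff,
      ite_mul, zero_mul]
    rw [Finset.sum_ite_eq]
    simp only [Finset.mem_univ, if_true]
    rw [tsum_congr hpt,
      Summable.tsum_add (summable_sum (fun ℓ _ => (hA1 ℓ).add (hA2 ℓ))) ((hW0sum j).mul_left _),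
      Summable.tsum_finsetSum (fun ℓ _ => (hA1 ℓ).add (hA2 ℓ)), tsum_mul_left,
      Finset.sum_congr rfl (fun ℓ _ => hper ℓ)]
    have hE : ((Real.sqrt (X.w.mV (X.xv j)) : ℝ) : ℂ) *
        (∑ ℓ : Fin l,
          ((-((X.w.mA (X.eA ℓ) / X.w.mV (X.xv j) : ℝ) : ℂ)) *
            ((if X.oi ℓ = j then (1:ℂ) else 0) *
              ∑' μ : Fin d → ℤ, eChar ξ (-μ) * f1 (X.actA μ (X.eA ℓ))) +
          (-((X.w.mA (X.eA ℓ) / X.w.mV (X.xv j) : ℝ) : ℂ)) *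
            ((if X.ti ℓ = j then (1:ℂ) else 0) *
              -(eChar ξ (-(X.teta ℓ)) *
                ∑' μ : Fin d → ℤ, eChar ξ (-μ) * f1 (X.actA μ (X.eA ℓ))))))
        = ∑ ℓ : Fin l,
            ((Real.sqrt (X.w.mA (X.eA ℓ) / X.w.mV (X.xv j)) : ℝ) : ℂ) *
              (-(if X.oi ℓ = j then (1:ℂ) else 0) +
                eChar ξ (-(X.teta ℓ)) * (if X.ti ℓ = j then (1:ℂ) else 0)) *
              (((Real.sqrt (X.w.mA (X.eA ℓ)) : ℝ) : ℂ) *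
                ∑' μ : Fin d → ℤ, eChar ξ (-μ) * f1 (X.actA μ (X.eA ℓ))) := by
      rw [Finset.mul_sum]
      refine Finset.sum_congr rfl (fun ℓ _ => ?_)
      have hr : Real.sqrt (X.w.mV (X.xv j)) * (X.w.mA (X.eA ℓ) / X.w.mV (X.xv j))
          = Real.sqrt (X.w.mA (X.eA ℓ) / X.w.mV (X.xv j)) * Real.sqrt (X.w.mA (X.eA ℓ)) := by
        have hmv := X.w.mV_pos (X.xv j)
        have hma := X.w.mA_pos (X.eA ℓ)
        have key : Real.sqrt (X.w.mV (X.xv j)) * Real.sqrt (X.w.mV (X.xv j)) = X.w.mV (X.xv j) :=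
          Real.mul_self_sqrt hmv.le
        rw [Real.sqrt_div hma.le, div_mul_eq_mul_div, Real.mul_self_sqrt hma.le,
          eq_div_iff (Real.sqrt_pos.2 hmv).ne']
        have h2 : Real.sqrt (X.w.mV (X.xv j)) * (X.w.mA (X.eA ℓ) / X.w.mV (X.xv j)) *
              Real.sqrt (X.w.mV (X.xv j))
            = Real.sqrt (X.w.mV (X.xv j)) * Real.sqrt (X.w.mV (X.xv j)) * X.w.mA (X.eA ℓ) /
              X.w.mV (X.xv j) := by ring
        rw [h2, key, mul_div_cancel_left₀ _ hmv.ne']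
      have hcast : ((Real.sqrt (X.w.mV (X.xv j)) : ℝ) : ℂ) *
          ((X.w.mA (X.eA ℓ) / X.w.mV (X.xv j) : ℝ) : ℂ)
          = ((Real.sqrt (X.w.mA (X.eA ℓ) / X.w.mV (X.xv j)) : ℝ) : ℂ) *
            ((Real.sqrt (X.w.mA (X.eA ℓ)) : ℝ) : ℂ) := by
        exact_mod_cast congrArg Complex.ofReal hr
      generalize (∑' μ : Fin d → ℤ, eChar ξ (-μ) * f1 (X.actA μ (X.eA ℓ))) = Wl
      linear_combination ((eChar ξ (-(X.teta ℓ)) * (if X.ti ℓ = j then (1:ℂ) else 0) -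
        (if X.oi ℓ = j then (1:ℂ) else 0)) * Wl) * hcast
    linear_combination hE
  | inr ℓ =>
    have hB1 : Summable (fun μ : Fin d → ℤ => -(eChar ξ (-μ) * f0 (X.actV μ (X.xv (X.oi ℓ))))) :=
      (hW0sum (X.oi ℓ)).neg
    have hB2 : Summable (fun μ : Fin d → ℤ =>
        eChar ξ (-μ) * f0 (X.actV (μ + X.teta ℓ) (X.xv (X.ti ℓ)))) :=
      summable_mul_comp _ f0 hf0fin _ (fun μ μ' h => add_right_cancel (X.actV_free h))
    have hB3 : Summable (fun μ : Fin d → ℤ =>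
        (RΓA (X.eA ℓ) : ℂ) * (eChar ξ (-μ) * f1 (X.actA μ (X.eA ℓ)))) :=
      (hW1sum (X.eA ℓ)).mul_left _
    have hpt : ∀ μ : Fin d → ℤ,
        eChar ξ (-μ) * (dCob X.toDirGraph f0 (X.actA μ (X.eA ℓ)) +
          (RΓA (X.actA μ (X.eA ℓ)) : ℂ) * f1 (X.actA μ (X.eA ℓ)))
        = (-(eChar ξ (-μ) * f0 (X.actV μ (X.xv (X.oi ℓ)))) +
           eChar ξ (-μ) * f0 (X.actV (μ + X.teta ℓ) (X.xv (X.ti ℓ)))) +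
          (RΓA (X.eA ℓ) : ℂ) * (eChar ξ (-μ) * f1 (X.actA μ (X.eA ℓ))) := by
      intro μ
      simp only [dCob]
      rw [X.act_t, X.act_o, X.o_eA_spec, ← X.t_spec ℓ, ← X.actV_add, hRΓperA]
      ring
    have hshift2 :
        (∑' μ : Fin d → ℤ, eChar ξ (-μ) * f0 (X.actV (μ + X.teta ℓ) (X.xv (X.ti ℓ))))
        = eChar ξ (X.teta ℓ) *
            ∑' μ : Fin d → ℤ, eChar ξ (-μ) * f0 (X.actV μ (X.xv (X.ti ℓ))) := by
      have heq := (Equiv.subRight (X.teta ℓ)).tsum_eq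
        (fun μ : Fin d → ℤ => eChar ξ (-μ) * f0 (X.actV (μ + X.teta ℓ) (X.xv (X.ti ℓ))))
      rw [← heq]
      simp only [Equiv.subRight_apply]
      have hpt2 : ∀ μ : Fin d → ℤ,
          eChar ξ (-(μ - X.teta ℓ)) * f0 (X.actV (μ - X.teta ℓ + X.teta ℓ) (X.xv (X.ti ℓ)))
            = eChar ξ (X.teta ℓ) * (eChar ξ (-μ) * f0 (X.actV μ (X.xv (X.ti ℓ)))) := by
        intro μ
        have h1 : μ - X.teta ℓ + X.teta ℓ = μ := by abel
        have h2 : -(μ - X.teta ℓ) = X.teta ℓ + -μ := by abel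
        rw [h1, h2, eChar_add]
        ring
      rw [tsum_congr hpt2, tsum_mul_left]
    simp only [floquet, Sum.elim_inl, Sum.elim_inr, Matrix.mulVec, dotProduct,
      Fintype.sum_sum_type, hh0diagA, hh0AV, X.eta_eA, X.o_iff, X.orbit_iff,
      ite_mul, zero_mul]
    rw [Finset.sum_ite_eq]
    simp only [Finset.mem_univ, if_true]
    rw [tsum_congr hpt, Summable.tsum_add (hB1.add hB2) hB3, Summable.tsum_add hB1 hB2, tsum_neg, hshift2,
      tsum_mul_left]
    have hEv : (∑ j' : Fin n,
        ((Real.sqrt (X.w.mA (X.eA ℓ) / X.w.mV (X.xv j')) : ℝ) : ℂ) *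
          (-(if X.oi ℓ = j' then (1:ℂ) else 0) +
            eChar ξ (X.teta ℓ) * (if X.ti ℓ = j' then (1:ℂ) else 0)) *
          (((Real.sqrt (X.w.mV (X.xv j')) : ℝ) : ℂ) *
            ∑' μ : Fin d → ℤ, eChar ξ (-μ) * f0 (X.actV μ (X.xv j'))))
        = -(((Real.sqrt (X.w.mA (X.eA ℓ)) : ℝ) : ℂ) *
            ∑' μ : Fin d → ℤ, eChar ξ (-μ) * f0 (X.actV μ (X.xv (X.oi ℓ)))) +
          eChar ξ (X.teta ℓ) * (((Real.sqrt (X.w.mA (X.eA ℓ)) : ℝ) : ℂ) *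
            ∑' μ : Fin d → ℤ, eChar ξ (-μ) * f0 (X.actV μ (X.xv (X.ti ℓ)))) := by
      have hterm : ∀ j' : Fin n,
          ((Real.sqrt (X.w.mA (X.eA ℓ) / X.w.mV (X.xv j')) : ℝ) : ℂ) *
            (-(if X.oi ℓ = j' then (1:ℂ) else 0) +
              eChar ξ (X.teta ℓ) * (if X.ti ℓ = j' then (1:ℂ) else 0)) *
            (((Real.sqrt (X.w.mV (X.xv j')) : ℝ) : ℂ) *
              ∑' μ : Fin d → ℤ, eChar ξ (-μ) * f0 (X.actV μ (X.xv j')))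
          = (if X.oi ℓ = j' then
              -(((Real.sqrt (X.w.mA (X.eA ℓ)) : ℝ) : ℂ) *
                ∑' μ : Fin d → ℤ, eChar ξ (-μ) * f0 (X.actV μ (X.xv j'))) else 0) +
            (if X.ti ℓ = j' then
              eChar ξ (X.teta ℓ) * (((Real.sqrt (X.w.mA (X.eA ℓ)) : ℝ) : ℂ) *
                ∑' μ : Fin d → ℤ, eChar ξ (-μ) * f0 (X.actV μ (X.xv j'))) else 0) := by
        intro j'
        have hr2 : Real.sqrt (X.w.mA (X.eA ℓ) / X.w.mV (X.xv j')) *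
            Real.sqrt (X.w.mV (X.xv j')) = Real.sqrt (X.w.mA (X.eA ℓ)) := by
          rw [Real.sqrt_div (X.w.mA_pos _).le,
            div_mul_cancel₀ _ (Real.sqrt_pos.2 (X.w.mV_pos _)).ne']
        have hcast2 : ((Real.sqrt (X.w.mA (X.eA ℓ) / X.w.mV (X.xv j')) : ℝ) : ℂ) *
            ((Real.sqrt (X.w.mV (X.xv j')) : ℝ) : ℂ)
            = ((Real.sqrt (X.w.mA (X.eA ℓ)) : ℝ) : ℂ) := by
          exact_mod_cast congrArg Complex.ofReal hr2
        generalize (∑' μ : Fin d → ℤ, eChar ξ (-μ) * f0 (X.actV μ (X.xv j'))) = W0j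
        split_ifs with h1 h2 h2
        · linear_combination ((eChar ξ (X.teta ℓ) - 1) * W0j) * hcast2
        · linear_combination (-W0j) * hcast2
        · linear_combination (eChar ξ (X.teta ℓ) * W0j) * hcast2
        · ring
      rw [Finset.sum_congr rfl (fun j' _ => hterm j'), Finset.sum_add_distrib,
        Finset.sum_ite_eq, Finset.sum_ite_eq]
      simp only [Finset.mem_univ, if_true]
    linear_combination -hEv
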